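/- Suppose the Hilbert space operators U on X and V on Y have closed range and there exist invertible operators K : ker U → ker V and K₊ : ker U* → ker V*, and assume there is an isometry L : ran U → ran V. Then U and V are equivalent after one-sided extension: with X₀ = ran V ⊖ ran L, there exist invertible operators E : ran V ⊕ ker V* → (ran U ⊕ ker U*) ⊕ X₀ and F : (ran U* ⊕ ker U) ⊕ X₀ → ran V* ⊕ ker V such that E⁻¹(U ⊕ I_{X₀}) = V F. -/

import Mathlib

set_option linter.unusedSectionVars false
set_option linter.unusedVariables false
set_option maxHeartbeats 1000000


open ContinuousLinearMap

/-- 2×2 block operator matrix `[[A, B],[C, D]] : X ⊕ Y → X' ⊕ Y'`. -/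
noncomputable def blk {X Y X' Y' : Type*} [NormedAddCommGroup X] [NormedSpace ℝ X]
    [NormedAddCommGroup Y] [NormedSpace ℝ Y] [NormedAddCommGroup X'] [NormedSpace ℝ X']
    [NormedAddCommGroup Y'] [NormedSpace ℝ Y']
    (A : X →L[ℝ] X') (B : Y →L[ℝ] X') (C : X →L[ℝ] Y') (D : Y →L[ℝ] Y') :
    (X × Y) →L[ℝ] (X' × Y') :=
  (A.coprod B).prod (C.coprod D)

section blocks
variable {X Y X' Y' : Type*} [NormedAddCommGroup X] [NormedSpace ℝ X]
    [NormedAddCommGroup Y] [NormedSpace ℝ Y] [NormedAddCommGroup X'] [NormedSpace ℝ X']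
    [NormedAddCommGroup Y'] [NormedSpace ℝ Y']

/-- (1,1)-entry of a block operator. -/
noncomputable def b11 (T : (X × Y) →L[ℝ] (X' × Y')) : X →L[ℝ] X' :=
  (ContinuousLinearMap.fst ℝ X' Y').comp (T.comp (ContinuousLinearMap.inl ℝ X Y))

/-- (1,2)-entry of a block operator. -/
noncomputable def b12 (T : (X × Y) →L[ℝ] (X' × Y')) : Y →L[ℝ] X' :=
  (ContinuousLinearMap.fst ℝ X' Y').comp (T.comp (ContinuousLinearMap.inr ℝ X Y))

/-- (2,1)-entry of a block operator. -/
noncomputable def b21 (T : (X × Y) →L[ℝ] (X' × Y')) : X →L[ℝ] Y' :=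
  (ContinuousLinearMap.snd ℝ X' Y').comp (T.comp (ContinuousLinearMap.inl ℝ X Y))

/-- (2,2)-entry of a block operator. -/
noncomputable def b22 (T : (X × Y) →L[ℝ] (X' × Y')) : Y →L[ℝ] Y' :=
  (ContinuousLinearMap.snd ℝ X' Y').comp (T.comp (ContinuousLinearMap.inr ℝ X Y))

end blocks

section helpers
variable {H H₂ : Type*} [NormedAddCommGroup H] [InnerProductSpace ℝ H] [CompleteSpace H]
  [NormedAddCommGroup H₂] [InnerProductSpace ℝ H₂] [CompleteSpace H₂]

theorem oPaddoP (S : Submodule ℝ H) [CompleteSpace S] (x : H) :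
    (Submodule.orthogonalProjectionOnto S x : H) + Submodule.orthogonalProjectionOnto Sᗮ x = x :=
  Submodule.starProjection_add_starProjection_orthogonal (K := S) x

/-- orthogonal decomposition equivalence -/
noncomputable def odecomp (S : Submodule ℝ H) [CompleteSpace S] : H ≃L[ℝ] ↥S × ↥Sᗮ :=
  ContinuousLinearEquiv.equivOfInverse
    ((Submodule.orthogonalProjectionOnto S : H →L[ℝ] S).prod (Submodule.orthogonalProjectionOnto Sᗮ))
    (S.subtypeL.coprod Sᗮ.subtypeL)
    (fun x => oPaddoP S x)
    (fun p => by
      obtain ⟨s, t⟩ := p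
      simp [Prod.ext_iff, Submodule.orthogonalProjectionOnto_mem_subspace_eq_self,
        Submodule.orthogonalProjectionOnto_apply_of_mem_orthogonal t.2,
        Submodule.orthogonalProjectionOnto_orthogonal_apply_eq_zero s.2])

@[simp] theorem odecomp_apply (S : Submodule ℝ H) [CompleteSpace S] (x : H) :
    odecomp S x = (Submodule.orthogonalProjectionOnto S x, Submodule.orthogonalProjectionOnto Sᗮ x) := rfl

@[simp] theorem odecomp_symm_apply (S : Submodule ℝ H) [CompleteSpace S] (p : ↥S × ↥Sᗮ) :
    (odecomp S).symm p = ↑p.1 + ↑p.2 := rfl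

/-- cast between equal submodules -/
def sequivOfEq {p q : Submodule ℝ H} (h : p = q) : ↥p ≃L[ℝ] ↥q :=
  { LinearEquiv.ofEq p q h with
    continuous_toFun := continuous_subtype_val.subtype_mk _
    continuous_invFun := continuous_subtype_val.subtype_mk _ }

@[simp] theorem sequivOfEq_coe {p q : Submodule ℝ H} (h : p = q) (x : ↥p) :
    (sequivOfEq h x : H) = ↑x := rfl

@[simp] theorem sequivOfEq_symm_coe {p q : Submodule ℝ H} (h : p = q) (x : ↥q) :
    ((sequivOfEq h).symm x : H) = ↑x := rfl

theorem isClosed_range_coe' (T : H →L[ℝ] H₂) (hT : IsClosed (Set.range T)) :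
    IsClosed ((LinearMap.range (T : H →ₗ[ℝ] H₂) : Submodule ℝ H₂) : Set H₂) := by
  rwa [LinearMap.coe_range]

theorem ker_adj (T : H →L[ℝ] H₂) :
    LinearMap.ker (ContinuousLinearMap.adjoint T : H₂ →ₗ[ℝ] H) = (LinearMap.range (T : H →ₗ[ℝ] H₂))ᗮ := by
  ext x
  simp only [LinearMap.mem_ker, Submodule.mem_orthogonal, ContinuousLinearMap.coe_coe]
  constructor
  · rintro h u hu
    obtain ⟨z, rfl⟩ := hu
    rw [ContinuousLinearMap.coe_coe, ← ContinuousLinearMap.adjoint_inner_right, h, inner_zero_right]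
  · intro h
    rw [← inner_self_eq_zero (𝕜 := ℝ), ContinuousLinearMap.adjoint_inner_left, real_inner_comm]
    exact h _ ⟨_, rfl⟩

/-- restriction of a closed-range operator to an equivalence `(ker T)ᗮ ≃ range T`. -/
noncomputable def restrEquiv (T : H →L[ℝ] H₂) (hT : IsClosed (Set.range T)) :
    ↥(LinearMap.ker (T : H →ₗ[ℝ] H₂))ᗮ ≃L[ℝ] ↥(LinearMap.range (T : H →ₗ[ℝ] H₂)) :=
  haveI : CompleteSpace ↥(LinearMap.range (T : H →ₗ[ℝ] H₂)) := (isClosed_range_coe' T hT).completeSpace_coe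
  haveI : CompleteSpace ↥(LinearMap.ker (T : H →ₗ[ℝ] H₂)) := (ContinuousLinearMap.isClosed_ker T).completeSpace_coe
  ContinuousLinearEquiv.ofBijective
    ((T.comp (LinearMap.ker (T : H →ₗ[ℝ] H₂))ᗮ.subtypeL).codRestrict (LinearMap.range (T : H →ₗ[ℝ] H₂))
      (fun x => LinearMap.mem_range_self _ _))
    (by
      rw [LinearMap.ker_eq_bot']
      intro m hm
      have h0 : T ↑m = 0 := congrArg Subtype.val hm
      have : (m : H) ∈ (LinearMap.ker (T : H →ₗ[ℝ] H₂)) := h0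
      have := (Submodule.mem_orthogonal _ _).1 m.2 _ this
      ext
      exact inner_self_eq_zero.1 this
      )
    (by
      rw [LinearMap.range_eq_top]
      rintro ⟨y, z, rfl⟩
      haveI : CompleteSpace ↥(LinearMap.ker (T : H →ₗ[ℝ] H₂)) := (ContinuousLinearMap.isClosed_ker T).completeSpace_coe
      refine ⟨Submodule.orthogonalProjectionOnto (LinearMap.ker (T : H →ₗ[ℝ] H₂))ᗮ z, ?_⟩
      ext
      show T _ = T z
      conv_rhs => rw [← oPaddoP (LinearMap.ker (T : H →ₗ[ℝ] H₂)) z]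
      rw [map_add]
      simp [(Submodule.orthogonalProjectionOnto (LinearMap.ker (T : H →ₗ[ℝ] H₂)) z).2]
      exact (Submodule.orthogonalProjectionOnto (LinearMap.ker (T : H →ₗ[ℝ] H₂)) z).2
      )

@[simp] theorem restrEquiv_coe (T : H →L[ℝ] H₂) (hT : IsClosed (Set.range T))
    (x : ↥(LinearMap.ker (T : H →ₗ[ℝ] H₂))ᗮ) : (restrEquiv T hT x : H₂) = T ↑x := rfl

end helpers
section helpers2
open ContinuousLinearMap
variable {H H₂ : Type*} [NormedAddCommGroup H] [InnerProductSpace ℝ H] [CompleteSpace H]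
  [NormedAddCommGroup H₂] [InnerProductSpace ℝ H₂] [CompleteSpace H₂]

/-- a subspace of an ambient space identified with a subspace of a subspace -/
def subSubEquiv (S : Submodule ℝ H) (P : Submodule ℝ ↥S) (Q : Submodule ℝ H)
    (hQS : Q ≤ S) (hmem : ∀ (x : H) (hx : x ∈ S), ((⟨x, hx⟩ : ↥S) ∈ P ↔ x ∈ Q)) :
    ↥Q ≃L[ℝ] ↥P :=
  { toFun := fun q => ⟨⟨↑q, hQS q.2⟩, (hmem _ _).2 q.2⟩
    invFun := fun p => ⟨↑↑p, (hmem _ _).1 p.2⟩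
    map_add' := fun a b => rfl
    map_smul' := fun c a => rfl
    left_inv := fun q => rfl
    right_inv := fun p => rfl
    continuous_toFun := (continuous_subtype_val.subtype_mk _).subtype_mk _
    continuous_invFun := (continuous_subtype_val.comp continuous_subtype_val).subtype_mk _ }

@[simp] theorem subSubEquiv_coe (S : Submodule ℝ H) (P : Submodule ℝ ↥S) (Q : Submodule ℝ H)
    (hQS : Q ≤ S) (hmem) (q : ↥Q) :
    ((subSubEquiv S P Q hQS hmem q : ↥S) : H) = ↑q := rfl

@[simp] theorem subSubEquiv_symm_coe (S : Submodule ℝ H) (P : Submodule ℝ ↥S) (Q : Submodule ℝ H)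
    (hQS : Q ≤ S) (hmem) (p : ↥P) :
    ((subSubEquiv S P Q hQS hmem).symm p : H) = ↑↑p := rfl

theorem isometry_isClosed_range (T : H →L[ℝ] H₂) (hT : ∀ x, ‖T x‖ = ‖x‖) :
    IsClosed ((LinearMap.range (T : H →ₗ[ℝ] H₂) : Submodule ℝ H₂) : Set H₂) := by
  rw [LinearMap.coe_range]
  exact (AddMonoidHomClass.isometry_of_norm T hT).isClosedEmbedding.isClosed_range

/-- an isometry as an equivalence onto its range. -/
noncomputable def isomRangeEquiv (T : H →L[ℝ] H₂) (hT : ∀ x, ‖T x‖ = ‖x‖) :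
    H ≃L[ℝ] ↥(LinearMap.range (T : H →ₗ[ℝ] H₂)) :=
  haveI : CompleteSpace ↥(LinearMap.range (T : H →ₗ[ℝ] H₂)) := (isometry_isClosed_range T hT).completeSpace_coe
  ContinuousLinearEquiv.ofBijective
    (T.codRestrict (LinearMap.range (T : H →ₗ[ℝ] H₂)) (fun x => LinearMap.mem_range_self _ _))
    (by
      rw [LinearMap.ker_eq_bot']
      intro m hm
      have h0 : T m = 0 := congrArg Subtype.val hm
      have := hT m
      rw [h0, norm_zero] at this
      exact norm_eq_zero.1 this.symm)
    (by
      rw [LinearMap.range_eq_top]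
      rintro ⟨y, z, rfl⟩
      exact ⟨z, rfl⟩)

@[simp] theorem isomRangeEquiv_coe (T : H →L[ℝ] H₂) (hT : ∀ x, ‖T x‖ = ‖x‖) (x : H) :
    (isomRangeEquiv T hT x : H₂) = T x := rfl

end helpers2

section shuffles
variable {A B C : Type*} [NormedAddCommGroup A] [NormedSpace ℝ A]
  [NormedAddCommGroup B] [NormedSpace ℝ B] [NormedAddCommGroup C] [NormedSpace ℝ C]
open ContinuousLinearMap

/-- associator -/
def cassoc : ((A × B) × C) ≃L[ℝ] (A × (B × C)) :=
  ContinuousLinearEquiv.equivOfInverse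
    (((fst ℝ A B).comp (fst ℝ (A × B) C)).prod
      (((snd ℝ A B).comp (fst ℝ (A × B) C)).prod (snd ℝ (A × B) C)))
    (((fst ℝ A (B × C)).prod ((fst ℝ B C).comp (snd ℝ A (B × C)))).prod
      ((snd ℝ B C).comp (snd ℝ A (B × C))))
    (fun x => rfl) (fun x => rfl)

@[simp] theorem cassoc_apply (x : (A × B) × C) : (cassoc x : A × (B × C)) = (x.1.1, x.1.2, x.2) := rfl

/-- shuffle ((A×B)×C) to ((A×C)×B) -/
def cshuffle : ((A × B) × C) ≃L[ℝ] ((A × C) × B) :=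
  ContinuousLinearEquiv.equivOfInverse
    ((((fst ℝ A B).comp (fst ℝ (A × B) C)).prod (snd ℝ (A × B) C)).prod
      ((snd ℝ A B).comp (fst ℝ (A × B) C)))
    ((((fst ℝ A C).comp (fst ℝ (A × C) B)).prod (snd ℝ (A × C) B)).prod
      ((snd ℝ A C).comp (fst ℝ (A × C) B)))
    (fun x => rfl) (fun x => rfl)

@[simp] theorem cshuffle_apply (x : (A × B) × C) :
    (cshuffle x : (A × C) × B) = ((x.1.1, x.2), x.1.2) := rfl

end shuffles

open ContinuousLinearMap

section main
variable {X Y : Type*}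
    [NormedAddCommGroup X] [InnerProductSpace ℝ X] [CompleteSpace X]
    [NormedAddCommGroup Y] [InnerProductSpace ℝ Y] [CompleteSpace Y]
    (U : X →L[ℝ] X) (V : Y →L[ℝ] Y)
    (hU : IsClosed (Set.range U)) (hV : IsClosed (Set.range V))
    (K : ↥(LinearMap.ker (U : X →ₗ[ℝ] X)) ≃L[ℝ] ↥(LinearMap.ker (V : Y →ₗ[ℝ] Y)))
    (Kp : ↥(LinearMap.ker (ContinuousLinearMap.adjoint U : X →ₗ[ℝ] X)) ≃L[ℝ]
      ↥(LinearMap.ker (ContinuousLinearMap.adjoint V : Y →ₗ[ℝ] Y)))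
    (L : ↥(LinearMap.range (U : X →ₗ[ℝ] X)) →L[ℝ] ↥(LinearMap.range (V : Y →ₗ[ℝ] Y)))
    (hL : ∀ x, ‖L x‖ = ‖x‖)
    (X₀ : Submodule ℝ Y)
    (hle : X₀ ≤ LinearMap.range (V : Y →ₗ[ℝ] Y))
    (hmem : ∀ (x : Y) (hx : x ∈ LinearMap.range (V : Y →ₗ[ℝ] Y)),
      ((⟨x, hx⟩ : ↥(LinearMap.range (V : Y →ₗ[ℝ] Y))) ∈ (LinearMap.range (L : ↥(LinearMap.range (U : X →ₗ[ℝ] X)) →ₗ[ℝ] ↥(LinearMap.range (V : Y →ₗ[ℝ] Y))))ᗮ ↔ x ∈ X₀))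

/-- The invertible extension `F`. -/
noncomputable def FeDef : (X × ↥X₀) ≃L[ℝ] Y :=
  haveI : CompleteSpace ↥(LinearMap.range (U : X →ₗ[ℝ] X)) := (isClosed_range_coe' U hU).completeSpace_coe
  haveI : CompleteSpace ↥(LinearMap.range (V : Y →ₗ[ℝ] Y)) := (isClosed_range_coe' V hV).completeSpace_coe
  haveI : CompleteSpace ↥(LinearMap.ker (U : X →ₗ[ℝ] X)) := (ContinuousLinearMap.isClosed_ker U).completeSpace_coe
  haveI : CompleteSpace ↥(LinearMap.ker (V : Y →ₗ[ℝ] Y)) := (ContinuousLinearMap.isClosed_ker V).completeSpace_coe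
  haveI : CompleteSpace ↥(LinearMap.range (L : ↥(LinearMap.range (U : X →ₗ[ℝ] X)) →ₗ[ℝ] ↥(LinearMap.range (V : Y →ₗ[ℝ] Y)))) := (isometry_isClosed_range L hL).completeSpace_coe
  ((odecomp (LinearMap.ker (U : X →ₗ[ℝ] X))).prodCongr (ContinuousLinearEquiv.refl ℝ ↥X₀)).trans
    (cassoc.trans ((K.prodCongr ((((restrEquiv U hU).trans (isomRangeEquiv L hL)).prodCongr
        (subSubEquiv _ _ _ hle hmem)).trans
      ((odecomp (LinearMap.range (L : ↥(LinearMap.range (U : X →ₗ[ℝ] X)) →ₗ[ℝ] ↥(LinearMap.range (V : Y →ₗ[ℝ] Y))))).symm.trans (restrEquiv V hV).symm))).trans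
      (odecomp (LinearMap.ker (V : Y →ₗ[ℝ] Y))).symm))

/-- The invertible extension `E`. -/
noncomputable def EeDef : Y ≃L[ℝ] (X × ↥X₀) :=
  haveI : CompleteSpace ↥(LinearMap.range (U : X →ₗ[ℝ] X)) := (isClosed_range_coe' U hU).completeSpace_coe
  haveI : CompleteSpace ↥(LinearMap.range (V : Y →ₗ[ℝ] Y)) := (isClosed_range_coe' V hV).completeSpace_coe
  haveI : CompleteSpace ↥(LinearMap.range (L : ↥(LinearMap.range (U : X →ₗ[ℝ] X)) →ₗ[ℝ] ↥(LinearMap.range (V : Y →ₗ[ℝ] Y)))) := (isometry_isClosed_range L hL).completeSpace_coe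
  (odecomp (LinearMap.range (V : Y →ₗ[ℝ] Y))).trans
    (((((odecomp (LinearMap.range (L : ↥(LinearMap.range (U : X →ₗ[ℝ] X)) →ₗ[ℝ] ↥(LinearMap.range (V : Y →ₗ[ℝ] Y))))).trans
        ((isomRangeEquiv L hL).symm.prodCongr (subSubEquiv _ _ _ hle hmem).symm))).prodCongr
      ((sequivOfEq (ker_adj V).symm).trans (Kp.symm.trans (sequivOfEq (ker_adj U))))).trans
      (cshuffle.trans ((odecomp (LinearMap.range (U : X →ₗ[ℝ] X))).symm.prodCongr
        (ContinuousLinearEquiv.refl ℝ ↥X₀))))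

theorem FeDef_apply_V (x : X) (x₀ : ↥X₀) :
    haveI : CompleteSpace ↥(LinearMap.ker (U : X →ₗ[ℝ] X)) :=
      (ContinuousLinearMap.isClosed_ker U).completeSpace_coe
    V (FeDef U V hU hV K L hL X₀ hle hmem (x, x₀)) =
      ↑(L (restrEquiv U hU (Submodule.orthogonalProjectionOnto (LinearMap.ker (U : X →ₗ[ℝ] X))ᗮ x))) + ↑x₀ := by
  haveI : CompleteSpace ↥(LinearMap.range (U : X →ₗ[ℝ] X)) := (isClosed_range_coe' U hU).completeSpace_coe
  haveI : CompleteSpace ↥(LinearMap.range (V : Y →ₗ[ℝ] Y)) := (isClosed_range_coe' V hV).completeSpace_coe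
  haveI : CompleteSpace ↥(LinearMap.ker (U : X →ₗ[ℝ] X)) := (ContinuousLinearMap.isClosed_ker U).completeSpace_coe
  haveI : CompleteSpace ↥(LinearMap.ker (V : Y →ₗ[ℝ] Y)) := (ContinuousLinearMap.isClosed_ker V).completeSpace_coe
  haveI : CompleteSpace ↥(LinearMap.range (L : ↥(LinearMap.range (U : X →ₗ[ℝ] X)) →ₗ[ℝ] ↥(LinearMap.range (V : Y →ₗ[ℝ] Y)))) := (isometry_isClosed_range L hL).completeSpace_coe
  have hVker : ∀ m : ↥(LinearMap.ker (V : Y →ₗ[ℝ] Y)), V ↑m = 0 := fun m => m.2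
  have hVorth : ∀ w : ↥(LinearMap.ker (V : Y →ₗ[ℝ] Y))ᗮ, V ↑w = ↑(restrEquiv V hV w) := fun w => rfl
  simp only [FeDef, ContinuousLinearEquiv.trans_apply, ContinuousLinearEquiv.prodCongr_apply,
    ContinuousLinearEquiv.refl_apply, cassoc_apply, odecomp_apply, odecomp_symm_apply,
    map_add, hVker, hVorth, zero_add]
  rw [ContinuousLinearEquiv.apply_symm_apply]
  push_cast
  simp [isomRangeEquiv_coe]

theorem EeDef_apply (u : ↥(LinearMap.range (U : X →ₗ[ℝ] X))) (x₀ : ↥X₀) :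
    EeDef U V hU hV Kp L hL X₀ hle hmem (↑(L u) + ↑x₀) = (↑u, x₀) := by
  haveI : CompleteSpace ↥(LinearMap.range (U : X →ₗ[ℝ] X)) := (isClosed_range_coe' U hU).completeSpace_coe
  haveI : CompleteSpace ↥(LinearMap.range (V : Y →ₗ[ℝ] Y)) := (isClosed_range_coe' V hV).completeSpace_coe
  haveI : CompleteSpace ↥(LinearMap.range (L : ↥(LinearMap.range (U : X →ₗ[ℝ] X)) →ₗ[ℝ] ↥(LinearMap.range (V : Y →ₗ[ℝ] Y)))) := (isometry_isClosed_range L hL).completeSpace_coe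
  set eL := isomRangeEquiv L hL with heL
  set e0 := subSubEquiv (LinearMap.range (V : Y →ₗ[ℝ] Y)) (LinearMap.range (L : ↥(LinearMap.range (U : X →ₗ[ℝ] X)) →ₗ[ℝ] ↥(LinearMap.range (V : Y →ₗ[ℝ] Y))))ᗮ X₀ hle hmem with he0
  have hw : (↑(L u) + ↑x₀ : Y) = ↑((↑(eL u) : ↥(LinearMap.range (V : Y →ₗ[ℝ] Y))) + ↑(e0 x₀)) := by
    push_cast
    congr 1
  rw [hw]
  have h1 : Submodule.orthogonalProjectionOnto (LinearMap.range (V : Y →ₗ[ℝ] Y))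
      ((↑((↑(eL u) : ↥(LinearMap.range (V : Y →ₗ[ℝ] Y))) + ↑(e0 x₀))) : Y)
      = (↑(eL u) : ↥(LinearMap.range (V : Y →ₗ[ℝ] Y))) + ↑(e0 x₀) :=
    Submodule.orthogonalProjectionOnto_mem_subspace_eq_self _
  have h2 : Submodule.orthogonalProjectionOnto (LinearMap.range (V : Y →ₗ[ℝ] Y))ᗮ
      ((↑((↑(eL u) : ↥(LinearMap.range (V : Y →ₗ[ℝ] Y))) + ↑(e0 x₀))) : Y) = 0 :=
    Submodule.orthogonalProjectionOnto_orthogonal_apply_eq_zero (Submodule.coe_mem _)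
  have h3 : Submodule.orthogonalProjectionOnto (LinearMap.range (L : ↥(LinearMap.range (U : X →ₗ[ℝ] X)) →ₗ[ℝ] ↥(LinearMap.range (V : Y →ₗ[ℝ] Y))))
      ((↑(eL u) : ↥(LinearMap.range (V : Y →ₗ[ℝ] Y))) + ↑(e0 x₀)) = eL u := by
    rw [map_add, Submodule.orthogonalProjectionOnto_mem_subspace_eq_self,
      Submodule.orthogonalProjectionOnto_apply_of_mem_orthogonal (Submodule.coe_mem _),
      add_zero]
  have h4 : Submodule.orthogonalProjectionOnto (LinearMap.range (L : ↥(LinearMap.range (U : X →ₗ[ℝ] X)) →ₗ[ℝ] ↥(LinearMap.range (V : Y →ₗ[ℝ] Y))))ᗮ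
      ((↑(eL u) : ↥(LinearMap.range (V : Y →ₗ[ℝ] Y))) + ↑(e0 x₀)) = e0 x₀ := by
    rw [map_add, Submodule.orthogonalProjectionOnto_mem_subspace_eq_self,
      Submodule.orthogonalProjectionOnto_orthogonal_apply_eq_zero (Submodule.coe_mem _),
      zero_add]
  simp only [EeDef, ContinuousLinearEquiv.trans_apply, ContinuousLinearEquiv.prodCongr_apply,
    ContinuousLinearEquiv.refl_apply, cshuffle_apply, odecomp_apply, odecomp_symm_apply,
    h1, h2, h3, h4, map_zero]
  rw [ContinuousLinearEquiv.symm_apply_apply, ContinuousLinearEquiv.symm_apply_apply]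
  simp

end main


/-- Closed range Hilbert space operators with isomorphic kernels and cokernels, together with an
isometry `L : ran U → ran V`, are equivalent after one-sided extension with extension space
`X₀ = ran V ⊖ ran L`. -/
theorem stmt19 {X Y : Type*}
    [NormedAddCommGroup X] [InnerProductSpace ℝ X] [CompleteSpace X]
    [NormedAddCommGroup Y] [InnerProductSpace ℝ Y] [CompleteSpace Y]
    (U : X →L[ℝ] X) (V : Y →L[ℝ] Y)
    (hU : IsClosed (Set.range U)) (hV : IsClosed (Set.range V))
    (K : ↥(LinearMap.ker (U : X →ₗ[ℝ] X)) ≃L[ℝ] ↥(LinearMap.ker (V : Y →ₗ[ℝ] Y)))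
    (Kp : ↥(LinearMap.ker (ContinuousLinearMap.adjoint U : X →ₗ[ℝ] X)) ≃L[ℝ]
      ↥(LinearMap.ker (ContinuousLinearMap.adjoint V : Y →ₗ[ℝ] Y)))
    (L : ↥(LinearMap.range (U : X →ₗ[ℝ] X)) →L[ℝ] ↥(LinearMap.range (V : Y →ₗ[ℝ] Y)))
    (hL : ∀ x, ‖L x‖ = ‖x‖)
    (X₀ : Submodule ℝ Y)
    (hX₀ : X₀ = LinearMap.range (V : Y →ₗ[ℝ] Y) ⊓
      (LinearMap.range ((LinearMap.range (V : Y →ₗ[ℝ] Y)).subtypeL.comp L :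
        ↥(LinearMap.range (U : X →ₗ[ℝ] X)) →ₗ[ℝ] Y))ᗮ) :
    ∃ (E : Y →L[ℝ] (X × ↥X₀)) (E' : (X × ↥X₀) →L[ℝ] Y)
      (F : (X × ↥X₀) →L[ℝ] Y) (F' : Y →L[ℝ] (X × ↥X₀)),
      E.comp E' = ContinuousLinearMap.id ℝ (X × ↥X₀) ∧
      E'.comp E = ContinuousLinearMap.id ℝ Y ∧
      F.comp F' = ContinuousLinearMap.id ℝ Y ∧
      F'.comp F = ContinuousLinearMap.id ℝ (X × ↥X₀) ∧
      E'.comp (blk U 0 0 (ContinuousLinearMap.id ℝ ↥X₀)) = V.comp F := by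
  haveI : CompleteSpace ↥(LinearMap.ker (U : X →ₗ[ℝ] X)) :=
    (ContinuousLinearMap.isClosed_ker U).completeSpace_coe
  have hle : X₀ ≤ LinearMap.range (V : Y →ₗ[ℝ] Y) := by rw [hX₀]; exact inf_le_left
  have hmem : ∀ (x : Y) (hx : x ∈ LinearMap.range (V : Y →ₗ[ℝ] Y)),
      ((⟨x, hx⟩ : ↥(LinearMap.range (V : Y →ₗ[ℝ] Y))) ∈ (LinearMap.range (L : ↥(LinearMap.range (U : X →ₗ[ℝ] X)) →ₗ[ℝ] ↥(LinearMap.range (V : Y →ₗ[ℝ] Y))))ᗮ ↔ x ∈ X₀) := by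
    intro x hx
    rw [hX₀, Submodule.mem_inf]
    simp only [hx, true_and]
    constructor
    · intro h
      rw [Submodule.mem_orthogonal]
      rintro u ⟨w, rfl⟩
      simpa [Submodule.coe_inner] using h (L w) ⟨w, rfl⟩
    · intro h
      rw [Submodule.mem_orthogonal]
      rintro u ⟨w, rfl⟩
      have := (Submodule.mem_orthogonal _ _).1 h (((LinearMap.range (V : Y →ₗ[ℝ] Y)).subtypeL.comp L) w)
        ⟨w, rfl⟩
      simpa [Submodule.coe_inner] using this
  refine ⟨↑(EeDef U V hU hV Kp L hL X₀ hle hmem), ↑(EeDef U V hU hV Kp L hL X₀ hle hmem).symm,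
    ↑(FeDef U V hU hV K L hL X₀ hle hmem), ↑(FeDef U V hU hV K L hL X₀ hle hmem).symm,
    ?_, ?_, ?_, ?_, ?_⟩
  · exact ContinuousLinearEquiv.coe_comp_coe_symm _
  · exact ContinuousLinearEquiv.coe_symm_comp_coe _
  · exact ContinuousLinearEquiv.coe_comp_coe_symm _
  · exact ContinuousLinearEquiv.coe_symm_comp_coe _
  · apply ContinuousLinearMap.ext
    rintro ⟨x, x₀⟩
    have hb : blk U 0 0 (ContinuousLinearMap.id ℝ ↥X₀) (x, x₀) = (U x, x₀) := by
      simp [blk]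
    simp only [ContinuousLinearMap.comp_apply, ContinuousLinearEquiv.coe_coe, hb]
    rw [FeDef_apply_V]
    rw [ContinuousLinearEquiv.symm_apply_eq, EeDef_apply]
    have hx := oPaddoP (LinearMap.ker (U : X →ₗ[ℝ] X)) x
    have hux : U x = U ↑(Submodule.orthogonalProjectionOnto (LinearMap.ker (U : X →ₗ[ℝ] X))ᗮ x) := by
      conv_lhs => rw [← hx]
      rw [map_add]
      simp [(Submodule.orthogonalProjectionOnto (LinearMap.ker (U : X →ₗ[ℝ] X)) x).2]
      have h0 : U ((LinearMap.ker (U : X →ₗ[ℝ] X)).starProjection x) = 0 :=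
        (Submodule.orthogonalProjectionOnto (LinearMap.ker (U : X →ₗ[ℝ] X)) x).2
      rw [h0, sub_zero]
    rw [restrEquiv_coe, ← hux]
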